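/- If G is a 3-connected 2-cyclic simple graph on n ≥ 6 vertices, then every vertex of degree 3 in G has at least two neighbors of degree at least 5. -/
import Mathlib


/-- `G` is `k`-connected: more than `k` vertices, and removing fewer than `k`
vertices leaves a connected graph. -/
def SimpleGraph.KConnected {V : Type*} [Fintype V] (k : ℕ) (G : SimpleGraph V) : Prop :=
  k < Fintype.card V ∧ ∀ X : Set V, X.ncard < k → (G.induce (Xᶜ : Set V)).Connected
/-- The neighborhood of a vertex set `S`: vertices outside `S` with a neighbor in `S`. -/
def SimpleGraph.setNbhd {V : Type*} (G : SimpleGraph V) (S : Set V) : Set V :=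
  {v | v ∉ S ∧ ∃ u ∈ S, G.Adj u v}

/-- `G` is `k`-cyclic: every nonempty vertex set of size at most `k` is dominating
or has a cycle in its neighborhood. -/
def SimpleGraph.KCyclic {V : Type*} (k : ℕ) (G : SimpleGraph V) : Prop :=
  ∀ S : Set V, S.Nonempty → S.ncard ≤ k →
    S ∪ G.setNbhd S = Set.univ ∨ ¬ (G.induce (G.setNbhd S)).IsAcyclic

lemma triangle_of_not_acyclic {V : Type*} (G : SimpleGraph V) (S : Set V) (hfin : S.Finite)
    (hS : S.ncard ≤ 3) (h : ¬ (G.induce S).IsAcyclic) :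
    S.ncard = 3 ∧ ∀ p ∈ S, ∀ q ∈ S, p ≠ q → G.Adj p q := by
  classical
  haveI := hfin.fintype
  unfold SimpleGraph.IsAcyclic at h
  push_neg at h
  obtain ⟨w, cyc, hcyc⟩ := h
  have hcardS : Fintype.card S ≤ 3 := by
    rwa [← Nat.card_eq_fintype_card, Nat.card_coe_set_eq]
  have hlen : cyc.length = 3 := by
    have h1 := hcyc.support_nodup.length_le_card
    have h2 := cyc.length_support
    rw [List.length_tail, h2] at h1
    have := hcyc.three_le_length
    omega
  set u1 := cyc.getVert 1 with hu1
  set u2 := cyc.getVert 2 with hu2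
  have h01 : (G.induce S).Adj w u1 := by
    have := cyc.adj_getVert_succ (i := 0) (by omega)
    rwa [cyc.getVert_zero] at this
  have h12 : (G.induce S).Adj u1 u2 := cyc.adj_getVert_succ (i := 1) (by omega)
  have h20 : (G.induce S).Adj u2 w := by
    have := cyc.adj_getVert_succ (i := 2) (by omega)
    rwa [show (2:ℕ)+1 = 3 from rfl, ← hlen, cyc.getVert_length] at this
  have a01 : G.Adj ↑w ↑u1 := h01
  have a12 : G.Adj ↑u1 ↑u2 := h12
  have a20 : G.Adj ↑u2 ↑w := h20
  have hsub : ({↑w, ↑u1, ↑u2} : Set V) ⊆ S := by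
    rintro p (rfl | rfl | rfl)
    exacts [w.2, u1.2, u2.2]
  have hcard3 : ({↑w, ↑u1, ↑u2} : Set V).ncard = 3 := by
    rw [Set.ncard_insert_of_notMem (by simp [a01.ne, a20.ne']),
      Set.ncard_insert_of_notMem (by simp [a12.ne]), Set.ncard_singleton]
  have hSeq : S = ({↑w, ↑u1, ↑u2} : Set V) :=
    (Set.eq_of_subset_of_ncard_le hsub (by omega) hfin).symm
  refine ⟨by rw [hSeq, hcard3], ?_⟩
  intro p hp q hq hpq
  rw [hSeq] at hp hq
  rcases hp with rfl | rfl | rfl <;> rcases hq with rfl | rfl | rfl <;>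
    first
      | exact absurd rfl hpq
      | exact a01 | exact a01.symm | exact a12 | exact a12.symm
      | exact a20 | exact a20.symm

lemma ne_univ_of_ncard_lt {V : Type*} [Fintype V] {S : Set V}
    (h : S.ncard < Fintype.card V) : S ≠ Set.univ := by
  intro hS
  rw [hS, Set.ncard_univ, Nat.card_eq_fintype_card] at h
  exact lt_irrefl _ h


lemma step_lemma {V : Type*} [Fintype V] (G : SimpleGraph V) (h2 : G.KCyclic 2)
    (hn : 6 ≤ Fintype.card V) (v a b c : V)
    (hNv : G.neighborSet v = {a, b, c}) (hab : a ≠ b) (hac : a ≠ c) (hbc : b ≠ c)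
    (tab : G.Adj a b) (tac : G.Adj a c) (tbc : G.Adj b c)
    (hda : (G.neighborSet a).ncard ≤ 4) :
    ∃ x, x ∉ ({v, a, b, c} : Set V) ∧ G.Adj a x ∧ G.Adj b x ∧ G.Adj c x := by
  classical
  have memNv : ∀ u, G.Adj v u ↔ u = a ∨ u = b ∨ u = c := by
    intro u
    rw [← SimpleGraph.mem_neighborSet, hNv]
    simp
  have hva : G.Adj v a := (memNv a).mpr (Or.inl rfl)
  have hvb : G.Adj v b := (memNv b).mpr (Or.inr (Or.inl rfl))
  have hvc : G.Adj v c := (memNv c).mpr (Or.inr (Or.inr rfl))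
  set N' := G.setNbhd {v, a} with hN'
  set D := G.neighborSet a \ {v, b, c} with hD
  have hDcard : D.ncard ≤ 1 := by
    have hsub : ({v, b, c} : Set V) ⊆ G.neighborSet a := by
      rintro u (rfl | rfl | rfl)
      exacts [hva.symm, tab, tac]
    have h3 : ({v, b, c} : Set V).ncard = 3 := by
      rw [Set.ncard_insert_of_notMem (by simp [hvb.ne, hvc.ne]),
        Set.ncard_insert_of_notMem (by simp [hbc]), Set.ncard_singleton]
    rw [hD, Set.ncard_diff hsub, h3]
    omega
  have hN'sub : N' ⊆ {b, c} ∪ D := by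
    rintro u ⟨hu1, w, hw, hwu⟩
    simp only [Set.mem_insert_iff, Set.mem_singleton_iff, not_or] at hu1
    rcases hw with rfl | rfl
    · rcases (memNv u).mp hwu with rfl | rfl | rfl
      · exact absurd rfl hu1.2
      · exact Or.inl (Or.inl rfl)
      · exact Or.inl (Or.inr rfl)
    · by_cases hu : u = b ∨ u = c
      · exact Or.inl hu
      · push_neg at hu
        exact Or.inr ⟨hwu.symm.symm, by simp [hu1.1, hu.1, hu.2]⟩
  have hN'card : N'.ncard ≤ 3 := by
    calc N'.ncard ≤ ({b, c} ∪ D).ncard := Set.ncard_le_ncard hN'sub (Set.toFinite _)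
    _ ≤ ({b, c} : Set V).ncard + D.ncard := Set.ncard_union_le _ _
    _ ≤ 2 + 1 := by
        gcongr
        exact (Set.ncard_insert_le _ _).trans (by simp)
    _ = 3 := rfl
  have hcyc := h2 {v, a} ⟨v, Or.inl rfl⟩ ((Set.ncard_insert_le _ _).trans (by simp))
  rcases hcyc with hdom | hnac
  · exfalso
    refine ne_univ_of_ncard_lt (lt_of_le_of_lt ?_ (by omega : 5 < Fintype.card V)) hdom
    calc ({v, a} ∪ N').ncard ≤ (({v, a} : Set V) ∪ ({b, c} ∪ D)).ncard :=
          Set.ncard_le_ncard (Set.union_subset_union_right _ hN'sub) (Set.toFinite _)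
    _ ≤ ({v, a} : Set V).ncard + (({b, c} : Set V).ncard + D.ncard) :=
          (Set.ncard_union_le _ _).trans (by gcongr; exact Set.ncard_union_le _ _)
    _ ≤ 2 + (2 + 1) := by
        gcongr
        · exact (Set.ncard_insert_le _ _).trans (by simp)
        · exact (Set.ncard_insert_le _ _).trans (by simp)
    _ = 5 := rfl
  obtain ⟨hcard3, hpair⟩ := triangle_of_not_acyclic G N' (Set.toFinite _) hN'card hnac
  have hbN' : b ∈ N' := ⟨by simp [hvb.ne', hab.symm], v, Or.inl rfl, hvb⟩
  have hcN' : c ∈ N' := ⟨by simp [hvc.ne', hac.symm], v, Or.inl rfl, hvc⟩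
  have hex : ¬ N' ⊆ {b, c} := by
    intro hsub'
    have := Set.ncard_le_ncard hsub' (Set.toFinite _)
    have h2' : ({b, c} : Set V).ncard ≤ 2 := (Set.ncard_insert_le _ _).trans (by simp)
    omega
  obtain ⟨x, hxN', hxbc⟩ := Set.not_subset.mp hex
  simp only [Set.mem_insert_iff, Set.mem_singleton_iff, not_or] at hxbc
  have hxva : x ∉ ({v, a} : Set V) := hxN'.1
  simp only [Set.mem_insert_iff, Set.mem_singleton_iff, not_or] at hxva
  have hax : G.Adj a x := by
    obtain ⟨u, hu, hux⟩ := hxN'.2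
    rcases hu with rfl | rfl
    · rcases (memNv x).mp hux with rfl | rfl | rfl
      · exact absurd rfl hxva.2
      · exact absurd rfl hxbc.1
      · exact absurd rfl hxbc.2
    · exact hux
  exact ⟨x, by simp [hxva.1, hxva.2, hxbc.1, hxbc.2], hax,
    hpair b hbN' x hxN' (Ne.symm hxbc.1), hpair c hcN' x hxN' (Ne.symm hxbc.2)⟩

lemma key_lemma {V : Type*} [Fintype V] (G : SimpleGraph V) (h2 : G.KCyclic 2)
    (hn : 6 ≤ Fintype.card V) (v a b c : V)
    (hNv : G.neighborSet v = {a, b, c}) (hab : a ≠ b) (hac : a ≠ c) (hbc : b ≠ c)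
    (hda : (G.neighborSet a).ncard ≤ 4) (hdb : (G.neighborSet b).ncard ≤ 4) : False := by
  classical
  have memNv : ∀ u, G.Adj v u ↔ u = a ∨ u = b ∨ u = c := by
    intro u
    rw [← SimpleGraph.mem_neighborSet, hNv]
    simp
  have hva : G.Adj v a := (memNv a).mpr (Or.inl rfl)
  have hvb : G.Adj v b := (memNv b).mpr (Or.inr (Or.inl rfl))
  have hvc : G.Adj v c := (memNv c).mpr (Or.inr (Or.inr rfl))
  -- Step 1: S = {v} gives the triangle a b c
  have hsingle : G.setNbhd {v} = ({a, b, c} : Set V) := by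
    rw [← hNv]
    ext u
    simp only [SimpleGraph.setNbhd, Set.mem_setOf_eq, Set.mem_singleton_iff,
      SimpleGraph.mem_neighborSet, exists_eq_left]
    exact ⟨fun h => h.2, fun h => ⟨h.ne', h⟩⟩
  have habc_card : ({a, b, c} : Set V).ncard ≤ 3 := by
    refine (Set.ncard_insert_le _ _).trans ?_
    have := (Set.ncard_insert_le b ({c} : Set V))
    simp only [Set.ncard_singleton] at this ⊢
    omega
  have h1 := h2 {v} ⟨v, rfl⟩ (by simp)
  rw [hsingle] at h1
  have htri : ∀ p ∈ ({a, b, c} : Set V), ∀ q ∈ ({a, b, c} : Set V), p ≠ q → G.Adj p q := by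
    rcases h1 with hdom | hnac
    · exfalso
      refine ne_univ_of_ncard_lt (lt_of_le_of_lt ?_ (by omega : 4 < Fintype.card V)) hdom
      calc ({v} ∪ ({a, b, c} : Set V)).ncard ≤ ({v} : Set V).ncard + ({a,b,c} : Set V).ncard :=
            Set.ncard_union_le _ _
        _ ≤ 1 + 3 := by simp only [Set.ncard_singleton]; omega
        _ = 4 := rfl
    · exact (triangle_of_not_acyclic G _ (Set.toFinite _) habc_card hnac).2
  have tab : G.Adj a b := htri a (by simp) b (by simp) hab
  have tac : G.Adj a c := htri a (by simp) c (by simp) hac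
  have tbc : G.Adj b c := htri b (by simp) c (by simp) hbc
  -- Step 2: extra neighbors of a and b
  obtain ⟨x, hx, hax, hbx, hcx⟩ :=
    step_lemma G h2 hn v a b c hNv hab hac hbc tab tac tbc hda
  have hNv' : G.neighborSet v = ({b, a, c} : Set V) := by rw [hNv, Set.insert_comm]
  obtain ⟨y, hy, hby, hay, hcy⟩ :=
    step_lemma G h2 hn v b a c hNv' hab.symm hbc hac tab.symm tbc tac hdb
  simp only [Set.mem_insert_iff, Set.mem_singleton_iff, not_or] at hx hy
  obtain ⟨hxv, hxa, hxb, hxc⟩ := hx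
  obtain ⟨hyv, hyb, hya, hyc⟩ := hy
  -- Step 3: y = x
  have hyx : y = x := by
    by_contra hne
    have hsub : ({v, a, c, x, y} : Set V) ⊆ G.neighborSet b := by
      rintro u (rfl | rfl | rfl | rfl | rfl)
      exacts [hvb.symm, tab.symm, tbc, hbx, hby]
    have hc5 : ({v, a, c, x, y} : Set V).ncard = 5 := by
      rw [Set.ncard_insert_of_notMem (by simp [hva.ne, hvc.ne, Ne.symm hxv, Ne.symm hyv]),
        Set.ncard_insert_of_notMem (by simp [hac, Ne.symm hxa, Ne.symm hya]),
        Set.ncard_insert_of_notMem (by simp [Ne.symm hxc, Ne.symm hyc]),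
        Set.ncard_insert_of_notMem (by simp [Ne.symm hne]), Set.ncard_singleton]
    have := Set.ncard_le_ncard hsub (Set.toFinite _)
    omega
  rw [hyx] at hby hay hcy
  -- Step 4: exact neighborhoods of a and b
  have hc4a : ({v, b, c, x} : Set V).ncard = 4 := by
    rw [Set.ncard_insert_of_notMem (by simp [hvb.ne, hvc.ne, Ne.symm hxv]),
      Set.ncard_insert_of_notMem (by simp [hbc, Ne.symm hxb]),
      Set.ncard_insert_of_notMem (by simp [Ne.symm hxc]), Set.ncard_singleton]
  have hNa : G.neighborSet a = ({v, b, c, x} : Set V) := by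
    refine (Set.eq_of_subset_of_ncard_le ?_ (by omega) (Set.toFinite _)).symm
    rintro u (rfl | rfl | rfl | rfl)
    exacts [hva.symm, tab, tac, hax]
  have hc4b : ({v, a, c, x} : Set V).ncard = 4 := by
    rw [Set.ncard_insert_of_notMem (by simp [hva.ne, hvc.ne, Ne.symm hxv]),
      Set.ncard_insert_of_notMem (by simp [hac, Ne.symm hxa]),
      Set.ncard_insert_of_notMem (by simp [Ne.symm hxc]), Set.ncard_singleton]
  have hNb : G.neighborSet b = ({v, a, c, x} : Set V) := by
    refine (Set.eq_of_subset_of_ncard_le ?_ (by omega) (Set.toFinite _)).symm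
    rintro u (rfl | rfl | rfl | rfl)
    exacts [hvb.symm, tab.symm, tbc, hbx]
  -- Step 5: S = {a, b}
  have hN'' : G.setNbhd {a, b} = ({v, c, x} : Set V) := by
    ext u
    simp only [SimpleGraph.setNbhd, Set.mem_setOf_eq, Set.mem_insert_iff,
      Set.mem_singleton_iff, not_or]
    constructor
    · rintro ⟨⟨hu1, hu2⟩, w, hw, hwu⟩
      rcases hw with hw | hw
      · rw [hw] at hwu
        have : u ∈ G.neighborSet a := hwu
        rw [hNa] at this
        rcases this with rfl | rfl | rfl | rfl
        · exact Or.inl rfl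
        · exact absurd rfl hu2
        · exact Or.inr (Or.inl rfl)
        · exact Or.inr (Or.inr rfl)
      · rw [hw] at hwu
        have : u ∈ G.neighborSet b := hwu
        rw [hNb] at this
        rcases this with rfl | rfl | rfl | rfl
        · exact Or.inl rfl
        · exact absurd rfl hu1
        · exact Or.inr (Or.inl rfl)
        · exact Or.inr (Or.inr rfl)
    · rintro (rfl | rfl | rfl)
      · exact ⟨⟨hva.ne, hvb.ne⟩, a, Or.inl rfl, hva.symm⟩
      · exact ⟨⟨Ne.symm hac, Ne.symm hbc⟩, a, Or.inl rfl, tac⟩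
      · exact ⟨⟨hxa, hxb⟩, a, Or.inl rfl, hax⟩
  have h5 := h2 {a, b} ⟨a, Or.inl rfl⟩ ((Set.ncard_insert_le _ _).trans (by simp))
  rw [hN''] at h5
  rcases h5 with hdom | hnac
  · refine ne_univ_of_ncard_lt (lt_of_le_of_lt ?_ (by omega : 5 < Fintype.card V)) hdom
    calc ({a, b} ∪ ({v, c, x} : Set V)).ncard
        ≤ ({a, b} : Set V).ncard + ({v, c, x} : Set V).ncard := Set.ncard_union_le _ _
      _ ≤ 2 + 3 := by
          gcongr
          · exact (Set.ncard_insert_le _ _).trans (by simp)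
          · refine (Set.ncard_insert_le _ _).trans ?_
            have := Set.ncard_insert_le c ({x} : Set V)
            simp only [Set.ncard_singleton] at this ⊢
            omega
      _ = 5 := rfl
  · have hvcx : ({v, c, x} : Set V).ncard ≤ 3 := by
      refine (Set.ncard_insert_le _ _).trans ?_
      have := Set.ncard_insert_le c ({x} : Set V)
      simp only [Set.ncard_singleton] at this ⊢
      omega
    have hvx : G.Adj v x :=
      (triangle_of_not_acyclic G _ (Set.toFinite _) hvcx hnac).2 v (by simp) x (by simp)
        (Ne.symm hxv)
    rcases (memNv x).mp hvx with rfl | rfl | rfl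
    · exact hxa rfl
    · exact hxb rfl
    · exact hxc rfl

/-- In a 3-connected 2-cyclic graph on `n ≥ 6` vertices, every degree-3 vertex has
at least two neighbors of degree at least 5. -/
theorem stmt_11 {V : Type*} [Fintype V] (G : SimpleGraph V)
    (h3 : G.KConnected 3) (h2 : G.KCyclic 2) (hn : 6 ≤ Fintype.card V) :
    ∀ v : V, (G.neighborSet v).ncard = 3 →
      2 ≤ {u | u ∈ G.neighborSet v ∧ 5 ≤ (G.neighborSet u).ncard}.ncard := by
  classical
  intro v hdeg
  by_contra hlt
  push_neg at hlt
  obtain ⟨a, b, c, hab, hac, hbc, hNv⟩ := Set.ncard_eq_three.mp hdeg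
  have two_in : ∀ p q : V, p ≠ q →
      p ∈ {u | u ∈ G.neighborSet v ∧ 5 ≤ (G.neighborSet u).ncard} →
      q ∈ {u | u ∈ G.neighborSet v ∧ 5 ≤ (G.neighborSet u).ncard} → False := by
    intro p q hpq hp hq
    have hsub : ({p, q} : Set V) ⊆ {u | u ∈ G.neighborSet v ∧ 5 ≤ (G.neighborSet u).ncard} := by
      rintro u (rfl | rfl) <;> assumption
    have hle := Set.ncard_le_ncard hsub (Set.toFinite _)
    rw [Set.ncard_insert_of_notMem (by simp [hpq]), Set.ncard_singleton] at hle
    omega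
  have hma : a ∈ G.neighborSet v := by rw [hNv]; simp
  have hmb : b ∈ G.neighborSet v := by rw [hNv]; simp
  have hmc : c ∈ G.neighborSet v := by rw [hNv]; simp
  by_cases ha : (G.neighborSet a).ncard ≤ 4
  · by_cases hb : (G.neighborSet b).ncard ≤ 4
    · exact key_lemma G h2 hn v a b c hNv hab hac hbc ha hb
    · by_cases hc : (G.neighborSet c).ncard ≤ 4
      · exact key_lemma G h2 hn v a c b (by rw [hNv, Set.pair_comm b c]) hac hab hbc.symm ha hc
      · exact two_in b c hbc ⟨hmb, by omega⟩ ⟨hmc, by omega⟩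
  · by_cases hb : (G.neighborSet b).ncard ≤ 4
    · by_cases hc : (G.neighborSet c).ncard ≤ 4
      · exact key_lemma G h2 hn v b c a
          (by rw [hNv, Set.insert_comm a b, Set.pair_comm a c]) hbc hab.symm hac.symm hb hc
      · exact two_in a c hac ⟨hma, by omega⟩ ⟨hmc, by omega⟩
    · exact two_in a b hab ⟨hma, by omega⟩ ⟨hmb, by omega⟩
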